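/- Let g be a k-snapshot predictor and f* the true conditional distribution function. If g is ε-k-th-order calibrated, i.e., W₁(g(x), proj_k(f*([x]))) ≤ ε for all x, then g is (ε + |Y|/(2√k))-higher-order calibrated, i.e., W₁(g(x), f*([x])) ≤ ε + |Y|/(2√k) for all x. -/

import Mathlib

set_option linter.unusedSectionVars false
set_option maxHeartbeats 1000000

open MeasureTheory

/-- 1-Wasserstein distance wrt a cost `d`, as the infimum of the expected cost
over all couplings. -/
noncomputable def W1 {α : Type*} [MeasurableSpace α] (d : α → α → ℝ)
    (μ ν : Measure α) : ℝ :=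
  sInf {c | ∃ γ : Measure (α × α),
    γ.map Prod.fst = μ ∧ γ.map Prod.snd = ν ∧ c = ∫ q, d q.1 q.2 ∂γ}

/-- ℓ1 distance between two points of the simplex (as vectors). -/
noncomputable def l1dist {Y : Type*} [Fintype Y] (p q : Y → ℝ) : ℝ :=
  ∑ y, |p y - q y|

/-- The measure on `Y` corresponding to a probability vector `p : Y → ℝ`. -/
noncomputable def measOf {Y : Type*} [Fintype Y] [MeasurableSpace Y] (p : Y → ℝ) :
    Measure Y :=
  ∑ y, ENNReal.ofReal (p y) • Measure.dirac y

/-- The empirical distribution (normalized histogram) of a `k`-tuple of labels. -/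
noncomputable def emp {Y : Type*} [Fintype Y] [DecidableEq Y] (k : ℕ)
    (ys : Fin k → Y) : Y → ℝ :=
  fun j => ((Finset.univ.filter fun i => ys i = j).card : ℝ) / k

/-- The `k`-th order projection of a mixture `π ∈ Δ(Δ(Y))`: draw `p ~ π`, draw `k`
i.i.d. labels from `p`, and output their empirical distribution. -/
noncomputable def projk {Y : Type*} [Fintype Y] [DecidableEq Y] [MeasurableSpace Y]
    [MeasurableSingletonClass Y] (k : ℕ) (π : Measure (Y → ℝ)) : Measure (Y → ℝ) :=
  π.bind fun p => (Measure.pi fun _ : Fin k => measOf p).map (emp k)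

open ProbabilityTheory
open scoped ENNReal

section Aux
variable {Y : Type*} [Fintype Y] [DecidableEq Y] [MeasurableSpace Y]
  [MeasurableSingletonClass Y]



lemma l1dist_nonneg (p q : Y → ℝ) : 0 ≤ l1dist p q :=
  Finset.sum_nonneg fun _ _ => abs_nonneg _

lemma l1dist_symm (p q : Y → ℝ) : l1dist p q = l1dist q p := by
  unfold l1dist; exact Finset.sum_congr rfl fun y _ => abs_sub_comm _ _

lemma l1dist_triangle (p q r : Y → ℝ) : l1dist p r ≤ l1dist p q + l1dist q r := by
  unfold l1dist
  rw [← Finset.sum_add_distrib]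
  exact Finset.sum_le_sum fun y _ => abs_sub_le _ _ _

lemma measurable_l1dist [MeasurableSpace Y] :
    Measurable (fun q : (Y → ℝ) × (Y → ℝ) => l1dist q.1 q.2) := by
  unfold l1dist
  apply Finset.measurable_sum
  intro y _
  exact (((measurable_pi_apply y).comp measurable_fst).sub
    ((measurable_pi_apply y).comp measurable_snd)).abs

lemma measurable_l1dist_left [MeasurableSpace Y] (e : Y → ℝ) :
    Measurable (fun a : Y → ℝ => l1dist a e) := by
  unfold l1dist
  exact Finset.measurable_sum _ fun y _ => ((measurable_pi_apply y).sub measurable_const).abs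

lemma measurable_l1dist_right [MeasurableSpace Y] (e : Y → ℝ) :
    Measurable (fun a : Y → ℝ => l1dist e a) := by
  unfold l1dist
  exact Finset.measurable_sum _ fun y _ => (measurable_const.sub (measurable_pi_apply y)).abs

lemma prod_exp {R : Type*} [CommSemiring R] (k : ℕ) (f : Fin k → Y → R) :
    ∑ ys : Fin k → Y, ∏ i, f i (ys i) = ∏ i, ∑ c, f i c := by
  simpa [Fintype.piFinset_univ] using
    (Finset.prod_univ_sum (fun _ : Fin k => (Finset.univ : Finset Y)) f).symm

lemma emp_mem_simplex {k : ℕ} (hk : 0 < k) (ys : Fin k → Y) :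
    emp k ys ∈ stdSimplex ℝ Y := by
  constructor
  · intro y
    exact div_nonneg (Nat.cast_nonneg _) (Nat.cast_nonneg _)
  · unfold emp
    rw [← Finset.sum_div]
    have : ∑ j, ((Finset.univ.filter fun i => ys i = j).card : ℝ) = k := by
      have := Finset.card_eq_sum_card_fiberwise
        (fun i (_ : i ∈ (Finset.univ : Finset (Fin k))) => Finset.mem_univ (ys i))
      rw [Finset.card_univ, Fintype.card_fin] at this
      exact_mod_cast this.symm
    rw [this, div_self (by exact_mod_cast hk.ne')]



lemma measOf_singleton (p : Y → ℝ) (y : Y) : measOf p {y} = ENNReal.ofReal (p y) := by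
  rw [measOf, Measure.finset_sum_apply]
  rw [Finset.sum_eq_single y]
  · simp [Measure.smul_apply, Measure.dirac_apply]
  · intro b _ hb
    simp [Measure.smul_apply, Measure.dirac_apply, Set.indicator_apply, hb]
  · simp

instance measOf_finite (p : Y → ℝ) : IsFiniteMeasure (measOf p) := by
  constructor
  rw [measOf, Measure.finset_sum_apply]
  refine ENNReal.sum_lt_top.2 fun y _ => ?_
  simp [Measure.smul_apply, Measure.dirac_apply]

lemma pi_measOf (k : ℕ) (p : Y → ℝ) :
    (Measure.pi fun _ : Fin k => measOf p)
      = ∑ ys : Fin k → Y, (∏ i, ENNReal.ofReal (p (ys i))) • Measure.dirac ys := by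
  have h := Measure.sum_smul_dirac (Measure.pi fun _ : Fin k => measOf p)
  rw [Measure.sum_fintype] at h
  rw [← h]
  refine Finset.sum_congr rfl fun ys _ => ?_
  congr 1
  rw [← Set.univ_pi_singleton ys, Measure.pi_pi]
  exact Finset.prod_congr rfl fun i _ => measOf_singleton p (ys i)

noncomputable def mK (k : ℕ) (p : Y → ℝ) : Measure (Y → ℝ) :=
  (Measure.pi fun _ : Fin k => measOf p).map (emp k)

lemma map_finset_sum_aux {α β ι : Type*} [MeasurableSpace α] [MeasurableSpace β]
    {f : α → β} (hf : Measurable f) (s : Finset ι) (μ : ι → Measure α) :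
    (∑ i ∈ s, μ i).map f = ∑ i ∈ s, (μ i).map f := by
  ext t ht
  rw [Measure.map_apply hf ht, Measure.finset_sum_apply, Measure.finset_sum_apply]
  exact Finset.sum_congr rfl fun i _ => (Measure.map_apply hf ht).symm

lemma mK_eq (k : ℕ) (p : Y → ℝ) :
    mK k p = ∑ ys : Fin k → Y,
      (∏ i, ENNReal.ofReal (p (ys i))) • Measure.dirac (emp k ys) := by
  rw [mK, pi_measOf, map_finset_sum_aux (measurable_of_countable _)]
  refine Finset.sum_congr rfl fun ys _ => ?_
  rw [Measure.map_smul, Measure.map_dirac' (measurable_of_countable _)]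

lemma mK_apply (k : ℕ) (p : Y → ℝ) (A : Set (Y → ℝ)) :
    mK k p A = ∑ ys : Fin k → Y,
      (∏ i, ENNReal.ofReal (p (ys i))) * A.indicator 1 (emp k ys) := by
  rw [mK_eq, Measure.finset_sum_apply]
  refine Finset.sum_congr rfl fun ys _ => ?_
  rw [Measure.smul_apply, Measure.dirac_apply, smul_eq_mul]

lemma measurable_mK (k : ℕ) : Measurable (mK k (Y := Y)) := by
  apply Measure.measurable_of_measurable_coe
  intro A _
  simp only [mK_apply]
  apply Finset.measurable_sum
  intro ys _
  exact (Finset.measurable_prod _ fun i _ =>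
    ENNReal.measurable_ofReal.comp (measurable_pi_apply _)).mul measurable_const



lemma var_eq (k : ℕ) (hk : 0 < k) {p : Y → ℝ} (hp1 : ∑ c, p c = 1) (y : Y) :
    ∑ ys : Fin k → Y, (∏ i, p (ys i)) * (emp k ys y - p y) ^ 2
      = p y * (1 - p y) / k := by
  classical
  set q := p y with hq
  set X : Y → ℝ := fun c => if c = y then 1 else 0 with hX
  have hkR : (k : ℝ) ≠ 0 := by exact_mod_cast hk.ne'
  -- emp in terms of X
  have hemp : ∀ ys : Fin k → Y, emp k ys y - q = (∑ i, (X (ys i) - q)) / k := by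
    intro ys
    have hcard : ((Finset.univ.filter fun i => ys i = y).card : ℝ) = ∑ i, X (ys i) := by
      rw [Finset.card_filter]
      push_cast
      refine Finset.sum_congr rfl fun i _ => ?_
      by_cases h : ys i = y <;> simp [hX, h]
    have hsum : ∑ i, (X (ys i) - q) = (∑ i, X (ys i)) - k * q := by
      rw [Finset.sum_sub_distrib, Finset.sum_const, Finset.card_univ, Fintype.card_fin,
        nsmul_eq_mul]
    rw [hsum, ← hcard]
    unfold emp
    field_simp
  -- basic expectations
  have hX2 : ∀ c, (X c) ^ 2 = X c := by
    intro c; by_cases h : c = y <;> simp [hX, h]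
  have hpX : ∑ c, p c * X c = q := by
    simp only [hX, mul_ite, mul_one, mul_zero]
    rw [Finset.sum_ite_eq' Finset.univ y p]
    simp [hq]
  have h0 : ∑ c, p c * (X c - q) = 0 := by
    have : ∀ c, p c * (X c - q) = p c * X c - q * p c := fun c => by ring
    simp only [this]
    rw [Finset.sum_sub_distrib, hpX, ← Finset.mul_sum, hp1]
    ring
  have h2 : ∑ c, p c * (X c - q) ^ 2 = q * (1 - q) := by
    have : ∀ c, p c * (X c - q) ^ 2
        = p c * X c - 2 * q * (p c * X c) + q ^ 2 * p c := by
      intro c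
      linear_combination p c * hX2 c
    simp only [this]
    rw [Finset.sum_add_distrib, Finset.sum_sub_distrib, hpX, ← Finset.mul_sum, hpX,
      ← Finset.mul_sum, hp1]
    ring
  -- diagonal and off-diagonal expectations
  have hEii : ∀ i : Fin k,
      ∑ ys : Fin k → Y, (∏ l, p (ys l)) * (X (ys i) - q) ^ 2 = q * (1 - q) := by
    intro i
    have step : ∀ ys : Fin k → Y,
        (∏ l, p (ys l)) * (X (ys i) - q) ^ 2
          = ∏ l, (p (ys l) * (if l = i then (X (ys l) - q) ^ 2 else 1)) := by
      intro ys
      rw [Finset.prod_mul_distrib, Finset.prod_ite_eq' Finset.univ i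
        (fun l => (X (ys l) - q) ^ 2)]
      simp
    simp only [step]
    have hpe : (∑ ys : Fin k → Y, ∏ l, (p (ys l) * if l = i then (X (ys l) - q) ^ 2 else 1))
        = ∏ l, ∑ c, (p c * if l = i then (X c - q) ^ 2 else 1) :=
      prod_exp k (fun l c => p c * if l = i then (X c - q) ^ 2 else 1)
    rw [hpe]
    have : ∀ l : Fin k, (∑ c, p c * (if l = i then (X c - q) ^ 2 else 1))
        = if l = i then q * (1 - q) else 1 := by
      intro l
      by_cases h : l = i <;> simp [h, h2, hp1]
    simp only [this]
    rw [Finset.prod_ite_eq' Finset.univ i (fun _ => q * (1 - q))]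
    simp
  have hEij : ∀ i j : Fin k, i ≠ j →
      ∑ ys : Fin k → Y, (∏ l, p (ys l)) * ((X (ys i) - q) * (X (ys j) - q)) = 0 := by
    intro i j hij
    have step : ∀ ys : Fin k → Y,
        (∏ l, p (ys l)) * ((X (ys i) - q) * (X (ys j) - q))
          = ∏ l, (p (ys l) * ((if l = i then X (ys l) - q else 1)
              * (if l = j then X (ys l) - q else 1))) := by
      intro ys
      rw [Finset.prod_mul_distrib, Finset.prod_mul_distrib,
        Finset.prod_ite_eq' Finset.univ i (fun l => X (ys l) - q),
        Finset.prod_ite_eq' Finset.univ j (fun l => X (ys l) - q)]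
      simp
    simp only [step]
    have hpe : (∑ ys : Fin k → Y, ∏ l, (p (ys l) * ((if l = i then X (ys l) - q else 1)
          * (if l = j then X (ys l) - q else 1))))
        = ∏ l, ∑ c, (p c * ((if l = i then X c - q else 1)
          * (if l = j then X c - q else 1))) :=
      prod_exp k (fun l c => p c * ((if l = i then X c - q else 1)
          * (if l = j then X c - q else 1)))
    rw [hpe]
    apply Finset.prod_eq_zero (Finset.mem_univ i)
    simp only [if_pos rfl, if_neg hij, mul_one]
    exact h0
  -- put together
  have expand : ∀ ys : Fin k → Y,
      (∏ l, p (ys l)) * (emp k ys y - q) ^ 2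
        = (∑ i, ∑ j, (∏ l, p (ys l)) * ((X (ys i) - q) * (X (ys j) - q))) / (k : ℝ) ^ 2 := by
    intro ys
    rw [hemp ys, div_pow, sq (∑ i, (X (ys i) - q)), Finset.sum_mul_sum]
    rw [← mul_div_assoc]
    congr 1
    rw [Finset.mul_sum]
    exact Finset.sum_congr rfl fun i _ => by rw [Finset.mul_sum]
  simp only [expand]
  rw [← Finset.sum_div]
  rw [Finset.sum_comm]
  have swap : ∀ i : Fin k, ∑ ys : Fin k → Y,
      ∑ j, (∏ l, p (ys l)) * ((X (ys i) - q) * (X (ys j) - q))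
      = ∑ j, ∑ ys : Fin k → Y, (∏ l, p (ys l)) * ((X (ys i) - q) * (X (ys j) - q)) :=
    fun i => Finset.sum_comm

  simp only [swap]
  have inner : ∀ i : Fin k,
      ∑ j, ∑ ys : Fin k → Y, (∏ l, p (ys l)) * ((X (ys i) - q) * (X (ys j) - q))
        = q * (1 - q) := by
    intro i
    rw [Finset.sum_eq_single i]
    · have : ∀ ys : Fin k → Y, (∏ l, p (ys l)) * ((X (ys i) - q) * (X (ys i) - q))
          = (∏ l, p (ys l)) * (X (ys i) - q) ^ 2 := fun ys => by ring
      simp only [this]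
      exact hEii i
    · intro j _ hji
      exact hEij i j (Ne.symm hji)
    · intro h; exact absurd (Finset.mem_univ i) h
  simp only [inner]
  rw [Finset.sum_const, Finset.card_univ, Fintype.card_fin, nsmul_eq_mul]
  field_simp

lemma l1dist_le_two {p q : Y → ℝ} (hp : p ∈ stdSimplex ℝ Y) (hq : q ∈ stdSimplex ℝ Y) :
    l1dist p q ≤ 2 := by
  have : l1dist p q ≤ ∑ y, (p y + q y) := by
    refine Finset.sum_le_sum fun y _ => ?_
    rw [abs_sub_le_iff]
    constructor
    · have := hq.1 y; linarith
    · have := hp.1 y; linarith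
  rw [Finset.sum_add_distrib, hp.2, hq.2] at this
  linarith

lemma key_real (k : ℕ) (hk : 0 < k) {p : Y → ℝ} (hp : p ∈ stdSimplex ℝ Y) :
    ∑ ys : Fin k → Y, (∏ i, p (ys i)) * l1dist (emp k ys) p
      ≤ (Fintype.card Y : ℝ) / (2 * Real.sqrt k) := by
  classical
  set w : (Fin k → Y) → ℝ := fun ys => ∏ i, p (ys i) with hw
  have hw0 : ∀ ys, 0 ≤ w ys := fun ys => Finset.prod_nonneg fun i _ => hp.1 (ys i)
  have hwsum : ∑ ys, w ys = 1 := by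
    rw [hw]
    rw [prod_exp k (fun _ c => p c)]
    rw [Finset.prod_const, hp.2, one_pow]
  have hk0 : (0:ℝ) < k := by exact_mod_cast hk
  have hsq : (0:ℝ) < Real.sqrt k := Real.sqrt_pos.2 hk0
  -- swap sums
  have hswap : ∑ ys : Fin k → Y, w ys * l1dist (emp k ys) p
      = ∑ y, ∑ ys : Fin k → Y, w ys * |emp k ys y - p y| := by
    rw [Finset.sum_comm]
    refine Finset.sum_congr rfl fun ys _ => ?_
    rw [l1dist, Finset.mul_sum]
  rw [hswap]
  have hbound : ∀ y : Y, ∑ ys : Fin k → Y, w ys * |emp k ys y - p y|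
      ≤ 1 / (2 * Real.sqrt k) := by
    intro y
    set S := ∑ ys : Fin k → Y, w ys * |emp k ys y - p y| with hS
    have hS0 : 0 ≤ S := Finset.sum_nonneg fun ys _ =>
      mul_nonneg (hw0 ys) (abs_nonneg _)
    have hV : ∑ ys : Fin k → Y, w ys * (emp k ys y - p y) ^ 2
        = p y * (1 - p y) / k := var_eq k hk hp.2 y
    have hCS : S ^ 2 ≤ ∑ ys : Fin k → Y, w ys * (emp k ys y - p y) ^ 2 := by
      have := Finset.sum_mul_sq_le_sq_mul_sq Finset.univ
        (fun ys : Fin k → Y => Real.sqrt (w ys))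
        (fun ys : Fin k → Y => Real.sqrt (w ys) * |emp k ys y - p y|)
      have e1 : ∀ ys : Fin k → Y, Real.sqrt (w ys) * (Real.sqrt (w ys) * |emp k ys y - p y|)
          = w ys * |emp k ys y - p y| := by
        intro ys
        rw [← mul_assoc, Real.mul_self_sqrt (hw0 ys)]
      have e2 : ∀ ys : Fin k → Y, Real.sqrt (w ys) ^ 2 = w ys := fun ys =>
        Real.sq_sqrt (hw0 ys)
      have e3 : ∀ ys : Fin k → Y, (Real.sqrt (w ys) * |emp k ys y - p y|) ^ 2
          = w ys * (emp k ys y - p y) ^ 2 := by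
        intro ys
        rw [mul_pow, Real.sq_sqrt (hw0 ys), sq_abs]
      simp only [e1, e2, e3] at this
      rw [hwsum, one_mul] at this
      exact this
    have hp1 : p y ≤ 1 := by
      have := Finset.single_le_sum (f := p) (fun c _ => hp.1 c) (Finset.mem_univ y)
      rw [hp.2] at this; exact this
    have hV4 : p y * (1 - p y) / k ≤ 1 / (4 * k) := by
      have h14 : p y * (1 - p y) ≤ 1 / 4 := by nlinarith [sq_nonneg (p y - 1/2)]
      rw [div_le_div_iff₀ hk0 (by linarith)]
      nlinarith
    have hsqeq : Real.sqrt (1 / (4 * k)) = 1 / (2 * Real.sqrt k) := by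
      rw [show (1:ℝ) / (4 * k) = (1 / (2 * Real.sqrt k)) ^ 2 by
        rw [div_pow, one_pow, mul_pow, Real.sq_sqrt hk0.le]; norm_num]
      exact Real.sqrt_sq (by positivity)
    calc S ≤ Real.sqrt (S ^ 2) := by rw [Real.sqrt_sq hS0]
      _ ≤ Real.sqrt (p y * (1 - p y) / k) := Real.sqrt_le_sqrt (hV ▸ hCS)
      _ ≤ Real.sqrt (1 / (4 * k)) := Real.sqrt_le_sqrt hV4
      _ = 1 / (2 * Real.sqrt k) := hsqeq
  calc ∑ y, ∑ ys : Fin k → Y, w ys * |emp k ys y - p y|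
      ≤ ∑ y : Y, 1 / (2 * Real.sqrt k) := Finset.sum_le_sum fun y _ => hbound y
    _ = (Fintype.card Y : ℝ) / (2 * Real.sqrt k) := by
        rw [Finset.sum_const, Finset.card_univ, nsmul_eq_mul, mul_one_div]


noncomputable def E0 {Y : Type*} [Fintype Y] [DecidableEq Y] (k : ℕ) : Finset (Y → ℝ) :=
  Finset.image (emp k) Finset.univ

lemma mK_singleton_fiber (k : ℕ) (p : Y → ℝ) (e : Y → ℝ) :
    mK k p {e} = ∑ ys ∈ Finset.univ.filter (fun ys : Fin k → Y => emp k ys = e),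
      ∏ i, ENNReal.ofReal (p (ys i)) := by
  classical
  rw [mK_apply, Finset.sum_filter]
  refine Finset.sum_congr rfl fun ys _ => ?_
  by_cases h : emp k ys = e
  · simp [Set.indicator_apply, h]
  · simp [Set.indicator_apply, h]

lemma mK_univ (k : ℕ) {p : Y → ℝ} (hp : p ∈ stdSimplex ℝ Y) :
    mK k p Set.univ = 1 := by
  rw [mK_apply]
  simp only [Set.indicator_univ, Pi.one_apply, mul_one]
  rw [prod_exp k (fun _ c => ENNReal.ofReal (p c)), Finset.prod_const]
  rw [← ENNReal.ofReal_sum_of_nonneg (fun c _ => hp.1 c), hp.2]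
  simp

lemma mK_sum_E0 (k : ℕ) (p : Y → ℝ) :
    ∑ e ∈ E0 (Y := Y) k, mK k p {e} = mK k p Set.univ := by
  classical
  simp only [mK_singleton_fiber, E0]
  rw [Finset.sum_fiberwise_of_maps_to
    (fun ys _ => Finset.mem_image_of_mem (emp k) (Finset.mem_univ ys))
    (fun ys : Fin k → Y => ∏ i, ENNReal.ofReal (p (ys i)))]
  rw [mK_apply]
  simp [Set.indicator_univ]

lemma mK_compl_E0 (k : ℕ) (p : Y → ℝ) :
    mK k p ((E0 (Y := Y) k : Set (Y → ℝ)))ᶜ = 0 := by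
  classical
  rw [mK_apply]
  refine Finset.sum_eq_zero fun ys _ => ?_
  have hmem : emp k ys ∈ (E0 (Y := Y) k : Set (Y → ℝ)) := by
    simp only [E0, Finset.coe_image, Finset.coe_univ, Set.image_univ, Set.mem_range]
    exact ⟨ys, rfl⟩
  rw [Set.indicator_of_notMem (by simpa using hmem)]
  simp

lemma key_ennreal (k : ℕ) (hk : 0 < k) {p : Y → ℝ} (hp : p ∈ stdSimplex ℝ Y) :
    ∑ e ∈ E0 (Y := Y) k, mK k p {e} * ENNReal.ofReal (l1dist e p)
      ≤ ENNReal.ofReal ((Fintype.card Y : ℝ) / (2 * Real.sqrt k)) := by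
  classical
  have step : ∀ e ∈ E0 (Y := Y) k, mK k p {e} * ENNReal.ofReal (l1dist e p)
      = ∑ ys ∈ Finset.univ.filter (fun ys : Fin k → Y => emp k ys = e),
          ENNReal.ofReal ((∏ i, p (ys i)) * l1dist (emp k ys) p) := by
    intro e _
    rw [mK_singleton_fiber, Finset.sum_mul]
    refine Finset.sum_congr rfl fun ys hys => ?_
    rw [Finset.mem_filter] at hys
    rw [ENNReal.ofReal_mul (Finset.prod_nonneg fun i _ => hp.1 _),
      ENNReal.ofReal_prod_of_nonneg (fun i _ => hp.1 _), hys.2]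
  rw [Finset.sum_congr rfl step]
  simp only [E0]
  rw [Finset.sum_fiberwise_of_maps_to
    (fun ys _ => Finset.mem_image_of_mem (emp k) (Finset.mem_univ ys))
    (fun ys : Fin k → Y => ENNReal.ofReal ((∏ i, p (ys i)) * l1dist (emp k ys) p))]
  rw [← ENNReal.ofReal_sum_of_nonneg (fun ys _ =>
    mul_nonneg (Finset.prod_nonneg fun i _ => hp.1 _) (l1dist_nonneg _ _))]
  exact ENNReal.ofReal_le_ofReal (key_real k hk hp)

end Aux

/-- **ε-k-th-order calibration implies (ε + |Y|/(2√k))-higher-order calibration.**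
If `W₁(g x, proj_k (f*([x]))) ≤ ε` for all `x`, then
`W₁(g x, f*([x])) ≤ ε + |Y|/(2√k)` for all `x`, where `f*([x])` is the Bayes mixture
over the level set of `x`. -/
theorem stmt4 {X Y ι : Type*} [MeasurableSpace X] [Fintype Y] [DecidableEq Y]
    [MeasurableSpace Y] [MeasurableSingletonClass Y]
    (μ : Measure X) [IsProbabilityMeasure μ]
    (fstar : X → Y → ℝ) (hfstar : Measurable fstar)
    (hfsimp : ∀ x, fstar x ∈ stdSimplex ℝ Y)
    (part : X → ι)
    (k : ℕ) (hk : 0 < k) (ε : ℝ)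
    (g : X → Measure (Y → ℝ)) (hprob : ∀ x, IsProbabilityMeasure (g x))
    (hcal : ∀ x, W1 l1dist (g x)
      (projk k ((ProbabilityTheory.cond μ {x' | part x' = part x}).map fstar)) ≤ ε)
    (x : X) :
    W1 l1dist (g x) ((ProbabilityTheory.cond μ {x' | part x' = part x}).map fstar)
      ≤ ε + (Fintype.card Y : ℝ) / (2 * Real.sqrt k) := by
  classical
  have hcalx := hcal x
  set s : Set X := {x' | part x' = part x} with hs_def
  set ν : Measure X := ProbabilityTheory.cond μ s with hν_def
  set π : Measure (Y → ℝ) := ν.map fstar with hπ_def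
  set σm : Measure (Y → ℝ) := projk k π with hσm_def
  set Bk : ℝ := (Fintype.card Y : ℝ) / (2 * Real.sqrt k) with hBk_def
  have hBk0 : 0 ≤ Bk := by rw [hBk_def]; positivity
  -- all candidate costs are nonnegative
  have hsetnn : ∀ (m1 m2 : Measure (Y → ℝ)) (c : ℝ),
      c ∈ {c | ∃ γ : Measure ((Y → ℝ) × (Y → ℝ)),
        γ.map Prod.fst = m1 ∧ γ.map Prod.snd = m2 ∧ c = ∫ q, l1dist q.1 q.2 ∂γ} →
      0 ≤ c := by
    rintro m1 m2 c ⟨γ, -, -, rfl⟩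
    exact integral_nonneg fun q => l1dist_nonneg _ _
  have hε0 : 0 ≤ ε :=
    le_trans (Real.sInf_nonneg fun c hc => hsetnn _ _ c hc) hcalx
  by_cases hμs : μ s = 0
  · -- degenerate case: the level set is null
    have hν0 : ν = 0 := by
      rw [hν_def]
      show (μ s)⁻¹ • μ.restrict s = 0
      rw [Measure.restrict_eq_zero.2 hμs, smul_zero]
    have hπ0 : π = 0 := by rw [hπ_def, hν0, Measure.map_zero]
    have hempty : {c | ∃ γ : Measure ((Y → ℝ) × (Y → ℝ)),
        γ.map Prod.fst = g x ∧ γ.map Prod.snd = π ∧ c = ∫ q, l1dist q.1 q.2 ∂γ} = ∅ := by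
      ext c
      simp only [Set.mem_setOf_eq, Set.mem_empty_iff_false, iff_false, not_exists]
      rintro γ ⟨h1, h2, -⟩
      have hγ0 : γ Set.univ = 0 := by
        have h := congrArg (fun m : Measure (Y → ℝ) => m Set.univ) h2
        rw [Measure.map_apply measurable_snd MeasurableSet.univ, Set.preimage_univ] at h
        rw [h, hπ0]; rfl
      have hγ : γ = 0 := Measure.measure_univ_eq_zero.1 hγ0
      rw [hγ, Measure.map_zero] at h1
      have h1' := (hprob x).measure_univ
      rw [← h1] at h1'
      simp at h1'
    show W1 l1dist (g x) π ≤ ε + Bk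
    rw [W1, hempty, Real.sInf_empty]
    linarith
  · -- main case
    haveI hνP : IsProbabilityMeasure ν := cond_isProbabilityMeasure hμs
    haveI hπP : IsProbabilityMeasure π := Measure.isProbabilityMeasure_map hfstar.aemeasurable
    have hbind : σm = π.bind (mK k) := rfl
    have hmKmeas : Measurable (mK (Y := Y) k) := measurable_mK k
    have hσ_apply : ∀ A : Set (Y → ℝ), MeasurableSet A →
        σm A = ∫⁻ x', mK k (fstar x') A ∂ν := by
      intro A hA
      have hf : Measurable fun p : Y → ℝ => mK k p A :=
        (Measure.measurable_coe hA).comp hmKmeas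
      rw [hbind, Measure.bind_apply hA hmKmeas.aemeasurable, hπ_def, lintegral_map hf hfstar]
    have hσuniv : σm Set.univ = 1 := by
      rw [hσ_apply _ MeasurableSet.univ,
        lintegral_congr fun x' => mK_univ k (hfsimp x'), lintegral_one, measure_univ]
    haveI hσP : IsProbabilityMeasure σm := ⟨hσuniv⟩
    have hEset : MeasurableSet ((E0 (Y := Y) k : Set (Y → ℝ))) :=
      (E0 (Y := Y) k).finite_toSet.measurableSet
    have hσE : σm ((E0 (Y := Y) k : Set (Y → ℝ)))ᶜ = 0 := by
      rw [hσ_apply _ hEset.compl,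
        lintegral_congr fun x' => mK_compl_E0 k (fstar x')]
      simp
    refine le_of_forall_pos_le_add fun δ hδ => ?_
    -- near-optimal coupling between g x and σm
    have hne : Set.Nonempty {c | ∃ γ : Measure ((Y → ℝ) × (Y → ℝ)),
        γ.map Prod.fst = g x ∧ γ.map Prod.snd = σm ∧ c = ∫ q, l1dist q.1 q.2 ∂γ} := by
      haveI := hprob x
      refine ⟨∫ q, l1dist q.1 q.2 ∂((g x).prod σm), (g x).prod σm, ?_, ?_, rfl⟩
      · exact Measure.fst_prod
      · exact Measure.snd_prod
    have hlt : sInf {c | ∃ γ : Measure ((Y → ℝ) × (Y → ℝ)),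
        γ.map Prod.fst = g x ∧ γ.map Prod.snd = σm ∧ c = ∫ q, l1dist q.1 q.2 ∂γ}
        < ε + δ := lt_of_le_of_lt hcalx (by linarith)
    obtain ⟨c₁, ⟨γ₁, hγ₁fst, hγ₁snd, hc₁⟩, hc₁lt⟩ := exists_lt_of_csInf_lt hne hlt
    -- building blocks of the glued coupling
    set Be : (Y → ℝ) → Set ((Y → ℝ) × (Y → ℝ)) := fun e => Prod.snd ⁻¹' {e} with hBe_def
    have hBeMeas : ∀ e, MeasurableSet (Be e) :=
      fun e => measurable_snd (measurableSet_singleton e)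
    set μe : (Y → ℝ) → Measure (Y → ℝ) :=
      fun e => (γ₁.restrict (Be e)).map Prod.fst with hμe_def
    have hμe_univ : ∀ e, μe e Set.univ = σm {e} := by
      intro e
      simp only [hμe_def]
      rw [Measure.map_apply measurable_fst MeasurableSet.univ, Set.preimage_univ,
        Measure.restrict_apply MeasurableSet.univ, Set.univ_inter,
        ← Measure.map_apply measurable_snd (measurableSet_singleton e), hγ₁snd]
    set ch : (Y → ℝ) → Measure (Y → ℝ) :=
      fun e => if σm {e} = 0 then g x else (σm {e})⁻¹ • μe e with hch_def
    have hσe_ne_top : ∀ e : Y → ℝ, σm {e} ≠ ⊤ := fun e => measure_ne_top σm {e}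
    have hchP : ∀ e, IsProbabilityMeasure (ch e) := by
      intro e
      simp only [hch_def]
      by_cases h : σm {e} = 0
      · rw [if_pos h]; exact hprob x
      · rw [if_neg h]
        constructor
        rw [Measure.smul_apply, hμe_univ e, smul_eq_mul,
          ENNReal.inv_mul_cancel h (hσe_ne_top e)]
    have hsmul_ch : ∀ e, σm {e} • ch e = μe e := by
      intro e
      simp only [hch_def]
      by_cases h : σm {e} = 0
      · rw [if_pos h, h, zero_smul]
        symm
        refine Measure.measure_univ_eq_zero.1 ?_
        rw [hμe_univ e, h]
      · rw [if_neg h, smul_smul, ENNReal.mul_inv_cancel h (hσe_ne_top e), one_smul]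
    set η : (Y → ℝ) → Measure X :=
      fun e => ν.withDensity (fun x' => mK k (fstar x') {e}) with hη_def
    have hWmeas : ∀ e : Y → ℝ, Measurable fun x' => mK k (fstar x') {e} := fun e =>
      (Measure.measurable_coe (measurableSet_singleton e)).comp (hmKmeas.comp hfstar)
    have hη_univ : ∀ e, η e Set.univ = σm {e} := by
      intro e
      simp only [hη_def]
      rw [withDensity_apply _ MeasurableSet.univ, Measure.restrict_univ,
        ← hσ_apply _ (measurableSet_singleton e)]
    have hηF : ∀ e, IsFiniteMeasure (η e) := by
      intro e
      constructor
      rw [hη_univ e]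
      exact (hσe_ne_top e).lt_top
    set ρ : (Y → ℝ) → Measure (Y → ℝ) := fun e => (η e).map fstar with hρ_def
    have hρ_univ : ∀ e, ρ e Set.univ = σm {e} := by
      intro e
      simp only [hρ_def]
      rw [Measure.map_apply hfstar MeasurableSet.univ, Set.preimage_univ, hη_univ]
    have hρF : ∀ e, IsFiniteMeasure (ρ e) := by
      intro e
      constructor
      rw [hρ_univ e]
      exact (hσe_ne_top e).lt_top
    set γ : Measure ((Y → ℝ) × (Y → ℝ)) :=
      ∑ e ∈ E0 (Y := Y) k, (ch e).prod (ρ e) with hγ_def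
    -- null complement for γ₁'s second marginal
    have hnull : γ₁ ((Prod.snd ⁻¹' (E0 (Y := Y) k : Set (Y → ℝ))))ᶜ = 0 := by
      rw [← Set.preimage_compl,
        ← Measure.map_apply measurable_snd hEset.compl, hγ₁snd]
      exact hσE
    -- first marginal of γ
    have hfst : γ.map Prod.fst = g x := by
      ext A hA
      rw [Measure.map_apply measurable_fst hA, hγ_def, Measure.finset_sum_apply]
      have hA' : Prod.fst ⁻¹' A = A ×ˢ (Set.univ : Set (Y → ℝ)) := by
        ext q; simp
      have step : ∀ e ∈ E0 (Y := Y) k,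
          ((ch e).prod (ρ e)) (Prod.fst ⁻¹' A) = γ₁ ((Prod.fst ⁻¹' A) ∩ Be e) := by
        intro e _
        haveI := hρF e
        rw [hA', Measure.prod_prod, hρ_univ e, mul_comm, ← smul_eq_mul,
          ← Measure.smul_apply, hsmul_ch e]
        simp only [hμe_def]
        rw [Measure.map_apply measurable_fst hA,
          Measure.restrict_apply (hA.preimage measurable_fst), hA']
      rw [Finset.sum_congr rfl step]
      have hdisj : ((E0 (Y := Y) k : Set (Y → ℝ))).PairwiseDisjoint
          (fun e => (Prod.fst ⁻¹' A) ∩ Be e) := by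
        intro a _ b _ hab
        refine Set.disjoint_left.2 fun q hqa hqb => hab ?_
        have h1 : q.2 = a := hqa.2
        have h2 : q.2 = b := hqb.2
        rw [← h1, h2]
      have hunion : (⋃ e ∈ E0 (Y := Y) k, (Prod.fst ⁻¹' A) ∩ Be e)
          = (Prod.fst ⁻¹' A) ∩ (Prod.snd ⁻¹' (E0 (Y := Y) k : Set (Y → ℝ))) := by
        ext q
        simp only [Set.mem_iUnion, Set.mem_inter_iff, Set.mem_preimage, hBe_def,
          Set.mem_singleton_iff, Finset.mem_coe, exists_prop]
        constructor
        · rintro ⟨e, he, hqA, hqe⟩; exact ⟨hqA, by rw [hqe]; exact he⟩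
        · rintro ⟨hqA, hqE⟩; exact ⟨q.2, hqE, hqA, rfl⟩
      rw [← measure_biUnion_finset hdisj
        (fun e _ => (hA.preimage measurable_fst).inter (hBeMeas e)), hunion,
        measure_inter_conull hnull,
        ← Measure.map_apply measurable_fst hA, hγ₁fst]
    -- second marginal of γ
    have hsnd : γ.map Prod.snd = π := by
      ext A hA
      rw [Measure.map_apply measurable_snd hA, hγ_def, Measure.finset_sum_apply]
      have hA' : Prod.snd ⁻¹' A = (Set.univ : Set (Y → ℝ)) ×ˢ A := by
        ext q; simp
      have hB : MeasurableSet (fstar ⁻¹' A) := hA.preimage hfstar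
      have step : ∀ e ∈ E0 (Y := Y) k,
          ((ch e).prod (ρ e)) (Prod.snd ⁻¹' A)
            = ∫⁻ x' in fstar ⁻¹' A, mK k (fstar x') {e} ∂ν := by
        intro e _
        haveI := hρF e
        haveI := hchP e
        rw [hA', Measure.prod_prod, measure_univ, one_mul]
        simp only [hρ_def]
        rw [Measure.map_apply hfstar hA]
        simp only [hη_def]
        rw [withDensity_apply _ hB]
      rw [Finset.sum_congr rfl step,
        ← lintegral_finset_sum _ (fun e _ => hWmeas e)]
      have hone : ∀ x', ∑ e ∈ E0 (Y := Y) k, mK k (fstar x') {e} = 1 := by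
        intro x'
        rw [mK_sum_E0 k (fstar x'), mK_univ k (hfsimp x')]
      rw [lintegral_congr hone, lintegral_one, Measure.restrict_apply_univ,
        hπ_def, Measure.map_apply hfstar hA]
    -- the cost of γ
    set cost : ((Y → ℝ) × (Y → ℝ)) → ℝ≥0∞ :=
      fun q => ENNReal.ofReal (l1dist q.1 q.2) with hcost_def
    have hcostmeas : Measurable cost := ENNReal.measurable_ofReal.comp measurable_l1dist
    set L : ℝ≥0∞ := ∫⁻ q, cost q ∂γ with hL_def
    set c : ℝ := ∫ q, l1dist q.1 q.2 ∂γ with hc_def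
    have hcL : c = L.toReal := by
      rw [hc_def, hL_def]
      exact integral_eq_lintegral_of_nonneg_ae
        (Filter.Eventually.of_forall fun q => l1dist_nonneg _ _)
        measurable_l1dist.aestronglyMeasurable
    have hbdd : BddBelow {c | ∃ γ' : Measure ((Y → ℝ) × (Y → ℝ)),
        γ'.map Prod.fst = g x ∧ γ'.map Prod.snd = π ∧ c = ∫ q, l1dist q.1 q.2 ∂γ'} :=
      ⟨0, fun c' hc' => hsetnn _ _ c' hc'⟩
    have hW1c : W1 l1dist (g x) π ≤ c := csInf_le hbdd ⟨γ, hfst, hsnd, rfl⟩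
    -- decomposition of the cost
    set Ae : (Y → ℝ) → ℝ≥0∞ :=
      fun e => (∫⁻ a, ENNReal.ofReal (l1dist a e) ∂(ch e)) * σm {e} with hAe_def
    set Be2 : (Y → ℝ) → ℝ≥0∞ :=
      fun e => ∫⁻ p', ENNReal.ofReal (l1dist e p') ∂(ρ e) with hBe2_def
    have hmeasA : ∀ e : Y → ℝ,
        Measurable fun q : (Y → ℝ) × (Y → ℝ) => ENNReal.ofReal (l1dist q.1 e) :=
      fun e => (ENNReal.measurable_ofReal.comp (measurable_l1dist_left e)).comp
        measurable_fst
    have hmeasB : ∀ e : Y → ℝ,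
        Measurable fun q : (Y → ℝ) × (Y → ℝ) => ENNReal.ofReal (l1dist e q.2) :=
      fun e => (ENNReal.measurable_ofReal.comp (measurable_l1dist_right e)).comp
        measurable_snd
    have hprod1 : ∀ e ∈ E0 (Y := Y) k,
        ∫⁻ q, ENNReal.ofReal (l1dist q.1 e) ∂((ch e).prod (ρ e)) = Ae e := by
      intro e _
      haveI := hρF e
      rw [lintegral_prod _ (hmeasA e).aemeasurable]
      simp only [lintegral_const, hρ_univ e]
      rw [hAe_def]
      exact lintegral_mul_const _
        (show Measurable fun a : Y → ℝ => ENNReal.ofReal (l1dist a e) from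
          ENNReal.measurable_ofReal.comp (measurable_l1dist_left e))
    have hprod2 : ∀ e ∈ E0 (Y := Y) k,
        ∫⁻ q, ENNReal.ofReal (l1dist e q.2) ∂((ch e).prod (ρ e)) = Be2 e := by
      intro e _
      haveI := hρF e
      haveI := hchP e
      rw [lintegral_prod _ (hmeasB e).aemeasurable]
      simp only [lintegral_const, measure_univ, mul_one, hBe2_def]
    have hLsum : L = ∑ e ∈ E0 (Y := Y) k, ∫⁻ q, cost q ∂((ch e).prod (ρ e)) := by
      rw [hL_def, hγ_def, lintegral_finset_sum_measure]
    set T1 : ℝ≥0∞ := ∑ e ∈ E0 (Y := Y) k, Ae e with hT1_def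
    set T2 : ℝ≥0∞ := ∑ e ∈ E0 (Y := Y) k, Be2 e with hT2_def
    have hLle : L ≤ T1 + T2 := by
      rw [hLsum, hT1_def, hT2_def, ← Finset.sum_add_distrib]
      refine Finset.sum_le_sum fun e he => ?_
      rw [← hprod1 e he, ← hprod2 e he, ← lintegral_add_left (hmeasA e)]
      refine lintegral_mono fun q => ?_
      calc cost q ≤ ENNReal.ofReal (l1dist q.1 e + l1dist e q.2) :=
            ENNReal.ofReal_le_ofReal (l1dist_triangle _ _ _)
        _ = _ := ENNReal.ofReal_add (l1dist_nonneg _ _) (l1dist_nonneg _ _)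
    have hT1le : T1 ≤ L + T2 := by
      rw [hLsum, hT1_def, hT2_def, ← Finset.sum_add_distrib]
      refine Finset.sum_le_sum fun e he => ?_
      rw [← hprod1 e he, ← hprod2 e he, ← lintegral_add_left hcostmeas]
      refine lintegral_mono fun q => ?_
      calc ENNReal.ofReal (l1dist q.1 e)
          ≤ ENNReal.ofReal (l1dist q.1 q.2 + l1dist e q.2) := by
            refine ENNReal.ofReal_le_ofReal ?_
            calc l1dist q.1 e ≤ l1dist q.1 q.2 + l1dist q.2 e := l1dist_triangle _ _ _
              _ = l1dist q.1 q.2 + l1dist e q.2 := by rw [l1dist_symm q.2 e]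
        _ = _ := ENNReal.ofReal_add (l1dist_nonneg _ _) (l1dist_nonneg _ _)
    set L1 : ℝ≥0∞ := ∫⁻ q, cost q ∂γ₁ with hL1_def
    have hT1eq : T1 = L1 := by
      have step : ∀ e ∈ E0 (Y := Y) k, Ae e = ∫⁻ q in Be e, cost q ∂γ₁ := by
        intro e _
        simp only [hAe_def]
        rw [mul_comm, ← smul_eq_mul, ← lintegral_smul_measure, hsmul_ch e]
        simp only [hμe_def]
        have hf : Measurable fun a : Y → ℝ => ENNReal.ofReal (l1dist a e) :=
          ENNReal.measurable_ofReal.comp (measurable_l1dist_left e)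
        rw [lintegral_map hf measurable_fst]
        refine setLIntegral_congr_fun (hBeMeas e)
          (fun q hq => ?_)
        have hq2 : q.2 = e := hq
        simp only [hcost_def]
        rw [← hq2]
      rw [hT1_def, Finset.sum_congr rfl step,
        ← lintegral_biUnion_finset ?_ (fun e _ => hBeMeas e) cost]
      · have hu : (⋃ e ∈ E0 (Y := Y) k, Be e)
            = Prod.snd ⁻¹' (E0 (Y := Y) k : Set (Y → ℝ)) := by
          ext q
          simp [hBe_def]
        rw [hu, hL1_def]
        congr 1
        refine Measure.restrict_eq_self_of_ae_mem ?_
        rw [Filter.eventually_iff, mem_ae_iff]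
        exact hnull
      · intro a _ b _ hab
        refine Set.disjoint_left.2 fun q hqa hqb => hab ?_
        have h1 : q.2 = a := hqa
        have h2 : q.2 = b := hqb
        rw [← h1, h2]
    have hT2le : T2 ≤ ENNReal.ofReal Bk := by
      have step : ∀ e ∈ E0 (Y := Y) k, Be2 e
          = ∫⁻ x', mK k (fstar x') {e} * ENNReal.ofReal (l1dist e (fstar x')) ∂ν := by
        intro e _
        rw [hBe2_def]
        simp only [hρ_def, hη_def]
        have hf : Measurable fun p' : Y → ℝ => ENNReal.ofReal (l1dist e p') :=
          ENNReal.measurable_ofReal.comp (measurable_l1dist_right e)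
        have hg : Measurable fun x' : X => ENNReal.ofReal (l1dist e (fstar x')) :=
          ENNReal.measurable_ofReal.comp ((measurable_l1dist_right e).comp hfstar)
        rw [lintegral_map hf hfstar,
          lintegral_withDensity_eq_lintegral_mul ν (hWmeas e) hg]
        rfl
      rw [hT2_def, Finset.sum_congr rfl step,
        ← lintegral_finset_sum (E0 (Y := Y) k)
          (f := fun e x' => mK k (fstar x') {e} * ENNReal.ofReal (l1dist e (fstar x')))
          (fun e _ => (hWmeas e).mul
            (ENNReal.measurable_ofReal.comp ((measurable_l1dist_right e).comp hfstar)))]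
      calc ∫⁻ x', ∑ e ∈ E0 (Y := Y) k,
            mK k (fstar x') {e} * ENNReal.ofReal (l1dist e (fstar x')) ∂ν
          ≤ ∫⁻ _, ENNReal.ofReal Bk ∂ν :=
            lintegral_mono fun x' => key_ennreal k hk (hfsimp x')
        _ = ENNReal.ofReal Bk := by rw [lintegral_const, measure_univ, mul_one]
    have hT2top : T2 ≠ ⊤ := ne_top_of_le_ne_top ENNReal.ofReal_ne_top hT2le
    by_cases hLtop : L = ⊤
    · have hc0 : c = 0 := by rw [hcL, hLtop]; simp
      calc W1 l1dist (g x) π ≤ c := hW1c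
        _ ≤ ε + Bk + δ := by rw [hc0]; linarith
    · have hL1top : L1 ≠ ⊤ := by
        intro h
        apply hLtop
        have h1 : (⊤ : ℝ≥0∞) ≤ L + T2 := by rw [← h, ← hT1eq]; exact hT1le
        have h2 : L + T2 = ⊤ := top_le_iff.1 h1
        rcases ENNReal.add_eq_top.1 h2 with h3 | h3
        · exact h3
        · exact absurd h3 hT2top
      have hc₁L : c₁ = L1.toReal := by
        rw [hc₁, hL1_def]
        exact integral_eq_lintegral_of_nonneg_ae
          (Filter.Eventually.of_forall fun q => l1dist_nonneg _ _)
          measurable_l1dist.aestronglyMeasurable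
      have hL1le : L1 ≤ ENNReal.ofReal (ε + δ) := by
        rw [← ENNReal.ofReal_toReal hL1top]
        exact ENNReal.ofReal_le_ofReal (by rw [← hc₁L]; exact hc₁lt.le)
      have hLle2 : L ≤ ENNReal.ofReal (ε + δ + Bk) := by
        rw [ENNReal.ofReal_add (by linarith) hBk0]
        exact hLle.trans (add_le_add (le_trans (le_of_eq hT1eq) hL1le) hT2le)
      have hcle : c ≤ ε + δ + Bk := by
        rw [hcL]
        calc L.toReal ≤ (ENNReal.ofReal (ε + δ + Bk)).toReal :=
              ENNReal.toReal_mono ENNReal.ofReal_ne_top hLle2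
          _ = ε + δ + Bk := ENNReal.toReal_ofReal (by linarith)
      calc W1 l1dist (g x) π ≤ c := hW1c
        _ ≤ ε + δ + Bk := hcle
        _ = ε + Bk + δ := by ring
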